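/- For all vectors a, b ∈ ℝ^n with |a|² > σ² and |b|² > σ², and real p > 2: ⟨(|b|²−σ²)^(p/2−1) b − (|a|²−σ²)^(p/2−1) a, b − a⟩ ≥ (1/2)·((|b|²−σ²)^(p/2−1) + (|a|²−σ²)^(p/2−1))·|a−b|². -/
import Mathlib


open RealInnerProductSpace

theorem stmt_11 (n : ℕ) (p σ : ℝ) (hp : 2 < p) (hσ : 0 < σ)
    (a b : EuclideanSpace ℝ (Fin n)) (ha : σ ^ 2 < ‖a‖ ^ 2) (hb : σ ^ 2 < ‖b‖ ^ 2) :
    ⟪(‖b‖ ^ 2 - σ ^ 2) ^ (p / 2 - 1) • b - (‖a‖ ^ 2 - σ ^ 2) ^ (p / 2 - 1) • a, b - a⟫ ≥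
      (1 / 2) * ((‖b‖ ^ 2 - σ ^ 2) ^ (p / 2 - 1) + (‖a‖ ^ 2 - σ ^ 2) ^ (p / 2 - 1)) *
        ‖a - b‖ ^ 2 := by
  have hA : 0 < ‖a‖ ^ 2 - σ ^ 2 := by linarith
  have hB : 0 < ‖b‖ ^ 2 - σ ^ 2 := by linarith
  set A := ‖a‖ ^ 2 - σ ^ 2 with hAdef
  set B := ‖b‖ ^ 2 - σ ^ 2 with hBdef
  have he : 0 < p / 2 - 1 := by linarith
  have key : 0 ≤ (B ^ (p / 2 - 1) - A ^ (p / 2 - 1)) * (B - A) := by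
    rcases le_total A B with h | h
    · have := Real.rpow_le_rpow hA.le h he.le
      nlinarith
    · have := Real.rpow_le_rpow hB.le h he.le
      nlinarith
  have h1 : ⟪(B ^ (p / 2 - 1)) • b - (A ^ (p / 2 - 1)) • a, b - a⟫ =
      B ^ (p / 2 - 1) * ‖b‖ ^ 2 - (B ^ (p / 2 - 1) + A ^ (p / 2 - 1)) * ⟪a, b⟫ +
        A ^ (p / 2 - 1) * ‖a‖ ^ 2 := by
    simp only [inner_sub_left, inner_sub_right, real_inner_smul_left,
      real_inner_self_eq_norm_sq, real_inner_comm a b]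
    ring
  have h2 : ‖a - b‖ ^ 2 = ‖a‖ ^ 2 - 2 * ⟪a, b⟫ + ‖b‖ ^ 2 := by
    rw [@norm_sub_sq_real]
  rw [ge_iff_le, h1, h2]
  have hBA : B - A = ‖b‖ ^ 2 - ‖a‖ ^ 2 := by rw [hAdef, hBdef]; ring
  nlinarith [key]
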